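/- For every α ∈ [0,1) and every s > 0, one has |((1+s)·e^{-αs} - 1)/s| ≤ max(e^{α-2}, 1-α). -/

import Mathlib

open Real

/-- Lower bound lemma: for `0 ≤ α`, `s ≥ 0`, we have `1 - (1+s)e^{-αs} ≤ e^{α-2} s`. -/
lemma aux_lower (α : ℝ) (hα : 0 ≤ α) : ∀ s : ℝ, 0 ≤ s →
    0 ≤ Real.exp (α - 2) * s - 1 + (1 + s) * Real.exp (-α * s) := by
  set f : ℝ → ℝ := fun s => Real.exp (α - 2) * s - 1 + (1 + s) * Real.exp (-α * s) with hf
  have hder : ∀ x : ℝ, HasDerivAt f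
      (Real.exp (α - 2) + (Real.exp (-α * x) + (1 + x) * (-α * Real.exp (-α * x)))) x := by
    intro x
    have h1 : HasDerivAt (fun s : ℝ => Real.exp (-α * s)) (-α * Real.exp (-α * x)) x := by
      have h0 : HasDerivAt (fun s : ℝ => -α * s) (-α) x := by
        simpa using (hasDerivAt_id x).const_mul (-α)
      simpa [mul_comm] using h0.exp
    have h2 : HasDerivAt (fun s : ℝ => (1 + s) * Real.exp (-α * s))
        (1 * Real.exp (-α * x) + (1 + x) * (-α * Real.exp (-α * x))) x := by
      exact (((hasDerivAt_id x).const_add 1)).mul h1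
    have h3 : HasDerivAt (fun s : ℝ => Real.exp (α - 2) * s - 1)
        (Real.exp (α - 2)) x := by
      simpa using ((hasDerivAt_id x).const_mul (Real.exp (α - 2))).sub_const 1
    have := h3.add h2
    rw [hf]
    exact this.congr_deriv (by ring)
  have hderiv_nonneg : ∀ x : ℝ, 0 ≤ x →
      0 ≤ Real.exp (α - 2) + (Real.exp (-α * x) + (1 + x) * (-α * Real.exp (-α * x))) := by
    intro x hx
    have key : Real.exp (-α * x) * (α + α * x - 1) ≤ Real.exp (α - 2) := by
      have h1 : α + α * x - 1 ≤ Real.exp (α * x + α - 2) := by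
        have := Real.add_one_le_exp (α * x + α - 2)
        linarith
      calc Real.exp (-α * x) * (α + α * x - 1)
          ≤ Real.exp (-α * x) * Real.exp (α * x + α - 2) := by
            exact mul_le_mul_of_nonneg_left h1 (Real.exp_pos _).le
        _ = Real.exp (α - 2) := by
            rw [← Real.exp_add]; ring_nf
    nlinarith [Real.exp_pos (-α * x)]
  have hmono : MonotoneOn f (Set.Ici (0:ℝ)) := by
    apply monotoneOn_of_deriv_nonneg (convex_Ici 0)
    · exact (Continuous.continuousOn (by
        fun_prop))
    · intro x hx
      exact (hder x).differentiableAt.differentiableWithinAt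
    · intro x hx
      rw [interior_Ici] at hx
      rw [(hder x).deriv]
      exact hderiv_nonneg x (le_of_lt hx)
  intro s hsge
  have h0 : f 0 = 0 := by simp [hf]
  have := hmono (Set.self_mem_Ici) (Set.mem_Ici.mpr hsge) hsge
  rw [h0] at this
  exact this

theorem stmt_2 (α : ℝ) (hα : α ∈ Set.Ico (0:ℝ) 1) (s : ℝ) (hs : 0 < s) :
    |((1 + s) * Real.exp (-α * s) - 1) / s| ≤ max (Real.exp (α - 2)) (1 - α) := by
  obtain ⟨hα0, hα1⟩ := hα
  set M := max (Real.exp (α - 2)) (1 - α) with hM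
  have hMe : Real.exp (α - 2) ≤ M := le_max_left _ _
  have hM1 : 1 - α ≤ M := le_max_right _ _
  -- upper bound: (1+s) e^{-αs} - 1 ≤ (1-α) s
  have hup : (1 + s) * Real.exp (-α * s) - 1 ≤ (1 - α) * s := by
    have h1 : 1 + α * s ≤ Real.exp (α * s) := by
      have := Real.add_one_le_exp (α * s); linarith
    have hpos : 0 < 1 + α * s := by nlinarith
    have h2 : Real.exp (-α * s) ≤ 1 / (1 + α * s) := by
      rw [neg_mul, Real.exp_neg, one_div]
      exact inv_anti₀ hpos h1
    have h3 : (1 + s) * Real.exp (-α * s) ≤ (1 + s) / (1 + α * s) := by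
      rw [div_eq_mul_one_div]
      exact mul_le_mul_of_nonneg_left h2 (by linarith)
    have h4 : (1 + s) / (1 + α * s) ≤ (1 - α) * s + 1 := by
      rw [div_le_iff₀ hpos]
      nlinarith [mul_nonneg (mul_nonneg hα0 (sq_nonneg s)) (by linarith : (0:ℝ) ≤ 1 - α)]
    linarith
  -- lower bound: -(e^{α-2} s) ≤ (1+s) e^{-αs} - 1
  have hlo : -(Real.exp (α - 2) * s) ≤ (1 + s) * Real.exp (-α * s) - 1 := by
    have := aux_lower α hα0 s hs.le
    linarith
  have habs : |(1 + s) * Real.exp (-α * s) - 1| ≤ M * s := by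
    rw [abs_le]
    constructor
    · have : Real.exp (α - 2) * s ≤ M * s := by
        exact mul_le_mul_of_nonneg_right hMe hs.le
      linarith
    · have : (1 - α) * s ≤ M * s := mul_le_mul_of_nonneg_right hM1 hs.le
      linarith
  rw [abs_div, abs_of_pos hs, div_le_iff₀ hs]
  exact habs
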